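/- Let $n \ge 2$, $A$ positive definite symmetric $n\times n$, $\alpha^2(y) = y^T A y$, $\beta(y) = b^T y$ with $b \ne 0$, $b^2 = b^T A^{-1} b$. Then the polynomial $b^2\alpha^2 - \beta^2$ does not divide the polynomial $P(y) = \alpha^2\{(3n-5)b^4\alpha^4 + (43n-59)b^2\alpha^2\beta^2 + 2(19n-34)\beta^4\}$ in $\mathbb{R}[y_1,\dots,y_n]$ when $n \ge 2$. -/

import Mathlib

open Matrix MvPolynomial

noncomputable def quadPoly {n : ℕ} (A : Matrix (Fin n) (Fin n) ℝ) : MvPolynomial (Fin n) ℝ :=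
  ∑ i, ∑ j, C (A i j) * X i * X j

noncomputable def linPoly {n : ℕ} (b : Fin n → ℝ) : MvPolynomial (Fin n) ℝ :=
  ∑ i, C (b i) * X i

lemma eval_quadPoly {n : ℕ} (A : Matrix (Fin n) (Fin n) ℝ) (y : Fin n → ℝ) :
    eval y (quadPoly A) = y ⬝ᵥ A *ᵥ y := by
  simp only [quadPoly, eval_sum, dotProduct, mulVec, _root_.map_mul, eval_C, eval_X, Finset.mul_sum]
  exact Finset.sum_congr rfl fun i _ => Finset.sum_congr rfl fun j _ => by ring

lemma eval_linPoly {n : ℕ} (b : Fin n → ℝ) (y : Fin n → ℝ) :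
    eval y (linPoly b) = b ⬝ᵥ y := by
  simp [linPoly, eval_sum, dotProduct]

/-- For `n ≥ 2`, the polynomial `b²α² - β²` does not divide
`P = α²{(3n-5)b⁴α⁴ + (43n-59)b²α²β² + 2(19n-34)β⁴}`. -/
theorem stmt5 {n : ℕ} (hn : 2 ≤ n) (A : Matrix (Fin n) (Fin n) ℝ) (hA : A.PosDef)
    (b : Fin n → ℝ) (hb : b ≠ 0) (b2 : ℝ) (hb2 : b2 = b ⬝ᵥ A⁻¹ *ᵥ b) :
    ¬ ((C b2 * quadPoly A - (linPoly b) ^ 2) ∣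
      quadPoly A *
        (C ((3 * (n : ℝ) - 5) * b2 ^ 2) * (quadPoly A) ^ 2 +
          C ((43 * (n : ℝ) - 59) * b2) * quadPoly A * (linPoly b) ^ 2 +
          C (2 * (19 * (n : ℝ) - 34)) * (linPoly b) ^ 4)) := by
  intro hdvd
  set y₀ : Fin n → ℝ := A⁻¹ *ᵥ b with hy₀
  have hAinv : A * A⁻¹ = 1 := Matrix.mul_nonsing_inv A (isUnit_iff_ne_zero.mpr hA.det_pos.ne')
  have hAy : A *ᵥ y₀ = b := by
    rw [hy₀, Matrix.mulVec_mulVec, hAinv, Matrix.one_mulVec]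
  have hquad : eval y₀ (quadPoly A) = b2 := by
    rw [eval_quadPoly, hAy, hb2, hy₀, dotProduct_comm]
  have hlin : eval y₀ (linPoly b) = b2 := by
    rw [eval_linPoly, hb2]
  have hb2pos : 0 < b2 := by
    have := hA.inv.dotProduct_mulVec_pos hb
    simpa [hb2] using this
  have h := map_dvd (eval y₀) hdvd
  simp only [_root_.map_mul, map_sub, map_add, map_pow, eval_C, hquad, hlin] at h
  rw [show b2 * b2 - b2 ^ 2 = 0 by ring, zero_dvd_iff] at h
  have hn' : (2 : ℝ) ≤ (n : ℝ) := by exact_mod_cast hn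
  nlinarith [pow_pos hb2pos 5, h]
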